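/- Let G be an (r,s)-directed hypergraph with all entries of the polynomial form nonnegative. For any p,q,p',q' ≥ 1, |λ_{p,q}(G) − λ_{p',q'}(G)| ≤ |E(G)|·(|p−p'| + |q−q'|). In particular, λ_{p,q}(G) is continuous as a function of (p,q) on [1,∞)^2. -/

import Mathlib

structure DirectedHypergraph (m n N r s : ℕ) where
  tail : Fin N → Finset (Fin m)
  head : Fin N → Finset (Fin n)
  tail_card : ∀ e, (tail e).card = r
  head_card : ∀ e, (head e).card = s

namespace DirectedHypergraph

noncomputable def pnorm {k : ℕ} (p : ℝ) (x : Fin k → ℝ) : ℝ :=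
  (∑ i, |x i| ^ p) ^ (1 / p)

variable {m n N r s : ℕ}

noncomputable def polyForm (G : DirectedHypergraph m n N r s)
    (x : Fin m → ℝ) (y : Fin n → ℝ) : ℝ :=
  ∑ e, (∏ u ∈ G.tail e, x u) * ∏ v ∈ G.head e, y v

noncomputable def specRad (G : DirectedHypergraph m n N r s) (p q : ℝ) : ℝ :=
  sSup {z | ∃ x y, pnorm p x = 1 ∧ pnorm q y = 1 ∧ z = G.polyForm x y}

def outDeg (G : DirectedHypergraph m n N r s) (u : Fin m) : ℕ :=
  (Finset.univ.filter fun e => u ∈ G.tail e).card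

def inDeg (G : DirectedHypergraph m n N r s) (v : Fin n) : ℕ :=
  (Finset.univ.filter fun e => v ∈ G.head e).card

end DirectedHypergraph

open Finset Real

namespace DirectedHypergraph

/-- core scalar estimate (one-sided): for `0 < t ≤ 1` and `1 ≤ p ≤ p'`,
`t^(1/p') - t^(1/p) ≤ p' - p`. -/
lemma rpow_one_div_aux {t p p' : ℝ} (h0 : 0 < t) (ht1 : t ≤ 1)
    (hp : 1 ≤ p) (hp' : 1 ≤ p') (hle : p ≤ p') :
    t ^ (1/p') - t ^ (1/p) ≤ p' - p := by
  have hp0 : (0:ℝ) < p := lt_of_lt_of_le one_pos hp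
  have hp'0 : (0:ℝ) < p' := lt_of_lt_of_le one_pos hp'
  set a := 1/p with ha
  set b := 1/p' with hb
  have hab : b ≤ a := one_div_le_one_div_of_le hp0 hle
  have hb0 : 0 < b := by rw [hb]; positivity
  have hlog : Real.log t ≤ 0 := Real.log_nonpos h0.le ht1
  have htb0 : 0 < t ^ b := Real.rpow_pos_of_pos h0 b
  have htb1 : t ^ b ≤ 1 := Real.rpow_le_one h0.le ht1 hb0.le
  have h1 : t ^ a = t ^ b * t ^ (a - b) := by
    rw [← Real.rpow_add h0]; ring_nf
  have h2 : 1 - t ^ (a - b) ≤ (a - b) * (-Real.log t) := by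
    have h3 := Real.add_one_le_exp (Real.log t * (a - b))
    rw [← Real.rpow_def_of_pos h0] at h3
    nlinarith [h3]
  -- bound t^b * (-log t) ≤ 1/b
  have hu : t ^ b * (-Real.log t) ≤ 1 / b := by
    have hlogu : Real.log (t ^ b) = b * Real.log t := Real.log_rpow h0 b
    have hinv : Real.log (1 / (t ^ b)) ≤ 1 / (t ^ b) - 1 :=
      Real.log_le_sub_one_of_pos (by positivity)
    rw [Real.log_div one_ne_zero htb0.ne', Real.log_one] at hinv
    -- -log(t^b) ≤ 1/(t^b)
    have h4 : t ^ b * (-Real.log (t ^ b)) ≤ 1 := by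
      have := mul_le_mul_of_nonneg_left hinv htb0.le
      have h5 : t ^ b * (1 / t ^ b) = 1 := by field_simp
      nlinarith
    rw [hlogu] at h4
    rw [div_eq_inv_mul, ← mul_le_mul_iff_right₀ hb0]
    calc b * (t ^ b * (-Real.log t)) = t ^ b * -(b * Real.log t) := by ring
      _ ≤ 1 := h4
      _ = b * (b⁻¹ * 1) := by field_simp
  have hab0 : 0 ≤ a - b := by linarith
  have step : t ^ b - t ^ a ≤ (a - b) * (1 / b) := by
    have := mul_le_mul_of_nonneg_left hu hab0
    calc t ^ b - t ^ a = t ^ b * (1 - t ^ (a - b)) := by rw [h1]; ring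
      _ ≤ t ^ b * ((a - b) * (-Real.log t)) := by
          apply mul_le_mul_of_nonneg_left h2 htb0.le
      _ = (a - b) * (t ^ b * (-Real.log t)) := by ring
      _ ≤ (a - b) * (1 / b) := this
  have hcalc : (a - b) * (1 / b) = (p' - p) / p := by
    rw [ha, hb]; field_simp
  have hdiv : (p' - p) / p ≤ p' - p := div_le_self (by linarith) hp
  linarith

/-- `|t^(1/p) - t^(1/p')| ≤ |p - p'|` for `t ∈ [0,1]`, `p, p' ≥ 1`. -/
lemma abs_rpow_one_div_sub {t p p' : ℝ} (ht0 : 0 ≤ t) (ht1 : t ≤ 1)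
    (hp : 1 ≤ p) (hp' : 1 ≤ p') :
    |t ^ (1/p) - t ^ (1/p')| ≤ |p - p'| := by
  have hp0 : (0:ℝ) < p := lt_of_lt_of_le one_pos hp
  have hp'0 : (0:ℝ) < p' := lt_of_lt_of_le one_pos hp'
  rcases eq_or_lt_of_le ht0 with h0 | h0
  · rw [← h0, Real.zero_rpow (by positivity), Real.zero_rpow (by positivity)]
    simp
  · rcases le_total p p' with h | h
    · have h1 := rpow_one_div_aux h0 ht1 hp hp' h
      have h2 : t ^ (1/p) ≤ t ^ (1/p') :=
        Real.rpow_le_rpow_of_exponent_ge h0 ht1 (one_div_le_one_div_of_le hp0 h)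
      rw [abs_of_nonpos (by linarith), abs_of_nonpos (by linarith)]
      linarith
    · have h1 := rpow_one_div_aux h0 ht1 hp' hp h
      have h2 : t ^ (1/p') ≤ t ^ (1/p) :=
        Real.rpow_le_rpow_of_exponent_ge h0 ht1 (one_div_le_one_div_of_le hp'0 h)
      rw [abs_of_nonneg (by linarith), abs_of_nonneg (by linarith)]
      linarith

lemma sum_rpow_eq_one {k : ℕ} {p : ℝ} (hp : 1 ≤ p) {x : Fin k → ℝ}
    (h : pnorm p x = 1) : ∑ i, |x i| ^ p = 1 := by
  have hp0 : (0:ℝ) < p := lt_of_lt_of_le one_pos hp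
  have hS : 0 ≤ ∑ i, |x i| ^ p :=
    Finset.sum_nonneg fun i _ => Real.rpow_nonneg (abs_nonneg _) _
  unfold pnorm at h
  calc ∑ i, |x i| ^ p = ((∑ i, |x i| ^ p) ^ (1/p)) ^ p := by
        rw [← Real.rpow_mul hS, one_div_mul_cancel hp0.ne', Real.rpow_one]
    _ = 1 := by rw [h, Real.one_rpow]

lemma abs_le_one_of_pnorm {k : ℕ} {p : ℝ} (hp : 1 ≤ p) {x : Fin k → ℝ}
    (h : pnorm p x = 1) (u : Fin k) : |x u| ≤ 1 := by
  have hp0 : (0:ℝ) < p := lt_of_lt_of_le one_pos hp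
  have h1 := sum_rpow_eq_one hp h
  have h2 : |x u| ^ p ≤ 1 := by
    rw [← h1]
    exact Finset.single_le_sum (f := fun i => |x i| ^ p)
      (fun i _ => Real.rpow_nonneg (abs_nonneg _) _) (Finset.mem_univ u)
  have h3 : (|x u| ^ p) ^ (1/p) ≤ (1:ℝ) ^ (1/p) :=
    Real.rpow_le_rpow (by positivity) h2 (by positivity)
  rwa [← Real.rpow_mul (abs_nonneg _), mul_one_div_cancel hp0.ne',
    Real.rpow_one, Real.one_rpow] at h3

lemma pnorm_renorm {k : ℕ} {p p' : ℝ} (hp : 1 ≤ p) (hp' : 1 ≤ p')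
    {x : Fin k → ℝ} (h : pnorm p x = 1) :
    pnorm p' (fun i => |x i| ^ (p / p')) = 1 := by
  have hp'0 : (0:ℝ) < p' := lt_of_lt_of_le one_pos hp'
  unfold pnorm
  have he : ∀ i : Fin k, abs (|x i| ^ (p / p')) ^ p' = |x i| ^ p := by
    intro i
    rw [abs_of_nonneg (Real.rpow_nonneg (abs_nonneg _) _),
      ← Real.rpow_mul (abs_nonneg _), div_mul_cancel₀ _ hp'0.ne']
  rw [Finset.sum_congr rfl (fun i _ => he i), sum_rpow_eq_one hp h, Real.one_rpow]

lemma prod_bound_aux {A B p q p' q' : ℝ} (hA0 : 0 ≤ A) (hA1 : A ≤ 1)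
    (hB0 : 0 ≤ B) (hB1 : B ≤ 1) (hp : 1 ≤ p) (hq : 1 ≤ q)
    (hp' : 1 ≤ p') (hq' : 1 ≤ q') :
    A ^ (1/p) * B ^ (1/q) ≤ A ^ (1/p') * B ^ (1/q') + (|p - p'| + |q - q'|) := by
  have hp0 : (0:ℝ) < p := lt_of_lt_of_le one_pos hp
  have hq0 : (0:ℝ) < q := lt_of_lt_of_le one_pos hq
  have hp'0 : (0:ℝ) < p' := lt_of_lt_of_le one_pos hp'
  have hq'0 : (0:ℝ) < q' := lt_of_lt_of_le one_pos hq'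
  have e1 := abs_rpow_one_div_sub hA0 hA1 hp hp'
  have e2 := abs_rpow_one_div_sub hB0 hB1 hq hq'
  obtain ⟨e1l, e1r⟩ := abs_le.mp e1
  obtain ⟨e2l, e2r⟩ := abs_le.mp e2
  have hAp' : 0 ≤ A ^ (1/p') := Real.rpow_nonneg hA0 _
  have hAp'1 : A ^ (1/p') ≤ 1 := Real.rpow_le_one hA0 hA1 (by positivity)
  have hBq : 0 ≤ B ^ (1/q) := Real.rpow_nonneg hB0 _
  have hBq1 : B ^ (1/q) ≤ 1 := Real.rpow_le_one hB0 hB1 (by positivity)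
  have hBq' : 0 ≤ B ^ (1/q') := Real.rpow_nonneg hB0 _
  nlinarith [mul_le_mul_of_nonneg_right e1r hBq, mul_le_mul_of_nonneg_left e2r hAp',
    mul_nonneg hAp' hBq', abs_nonneg (p - p'), abs_nonneg (q - q'),
    mul_le_mul_of_nonneg_right hBq1 (abs_nonneg (p - p')),
    mul_le_mul_of_nonneg_right hAp'1 (abs_nonneg (q - q'))]

variable {m n N r s : ℕ}

lemma polyForm_le_card (G : DirectedHypergraph m n N r s) {p q : ℝ}
    (hp : 1 ≤ p) (hq : 1 ≤ q) {x : Fin m → ℝ} {y : Fin n → ℝ}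
    (hx : pnorm p x = 1) (hy : pnorm q y = 1) :
    G.polyForm x y ≤ N := by
  unfold polyForm
  calc ∑ e, (∏ u ∈ G.tail e, x u) * ∏ v ∈ G.head e, y v
      ≤ ∑ _e : Fin N, (1:ℝ) := by
        apply Finset.sum_le_sum
        intro e _
        have habs : |(∏ u ∈ G.tail e, x u) * ∏ v ∈ G.head e, y v| ≤ 1 := by
          rw [abs_mul, Finset.abs_prod, Finset.abs_prod]
          refine mul_le_one₀ ?_ (Finset.prod_nonneg fun i _ => abs_nonneg _) ?_
          · exact Finset.prod_le_one (fun i _ => abs_nonneg _)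
              (fun i _ => abs_le_one_of_pnorm hp hx i)
          · exact Finset.prod_le_one (fun i _ => abs_nonneg _)
              (fun i _ => abs_le_one_of_pnorm hq hy i)
        linarith [le_abs_self ((∏ u ∈ G.tail e, x u) * ∏ v ∈ G.head e, y v)]
    _ = N := by simp

lemma bddAbove_spec (G : DirectedHypergraph m n N r s) {p q : ℝ}
    (hp : 1 ≤ p) (hq : 1 ≤ q) :
    BddAbove {z | ∃ x y, pnorm p x = 1 ∧ pnorm q y = 1 ∧ z = G.polyForm x y} := by
  refine ⟨N, ?_⟩
  rintro z ⟨x, y, hx, hy, rfl⟩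
  exact G.polyForm_le_card hp hq hx hy

lemma pnorm_single {k : ℕ} (hk : 0 < k) {p : ℝ} (hp : 1 ≤ p) :
    pnorm p (fun i : Fin k => if i = ⟨0, hk⟩ then (1:ℝ) else 0) = 1 := by
  have hp0 : (0:ℝ) < p := lt_of_lt_of_le one_pos hp
  unfold pnorm
  have he : ∀ i : Fin k, |if i = ⟨0, hk⟩ then (1:ℝ) else 0| ^ p
      = if i = ⟨0, hk⟩ then (1:ℝ) else 0 := by
    intro i
    by_cases h : i = ⟨0, hk⟩ <;> simp [h, Real.zero_rpow hp0.ne']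
  rw [Finset.sum_congr rfl (fun i _ => he i), Finset.sum_ite_eq'
    Finset.univ (⟨0, hk⟩ : Fin k) (fun _ => (1:ℝ))]
  simp

lemma specRad_nonneg (G : DirectedHypergraph m n N r s) (hm : 0 < m) (hn : 0 < n)
    {p q : ℝ} (hp : 1 ≤ p) (hq : 1 ≤ q) : 0 ≤ G.specRad p q := by
  set x0 : Fin m → ℝ := fun i => if i = ⟨0, hm⟩ then (1:ℝ) else 0 with hx0def
  set y0 : Fin n → ℝ := fun j => if j = ⟨0, hn⟩ then (1:ℝ) else 0 with hy0def
  have hx0 : pnorm p x0 = 1 := pnorm_single hm hp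
  have hy0 : pnorm q y0 = 1 := pnorm_single hn hq
  have hmem : G.polyForm x0 y0 ∈
      {z | ∃ x y, pnorm p x = 1 ∧ pnorm q y = 1 ∧ z = G.polyForm x y} :=
    ⟨x0, y0, hx0, hy0, rfl⟩
  have hnonneg : 0 ≤ G.polyForm x0 y0 := by
    unfold polyForm
    apply Finset.sum_nonneg
    intro e _
    apply mul_nonneg
    · apply Finset.prod_nonneg; intro i _
      rw [hx0def]; dsimp only; split <;> norm_num
    · apply Finset.prod_nonneg; intro i _
      rw [hy0def]; dsimp only; split <;> norm_num
  exact le_trans hnonneg (le_csSup (G.bddAbove_spec hp hq) hmem)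

lemma specRad_le_aux (G : DirectedHypergraph m n N r s) (hm : 0 < m) (hn : 0 < n)
    {p q p' q' : ℝ} (hp : 1 ≤ p) (hq : 1 ≤ q) (hp' : 1 ≤ p') (hq' : 1 ≤ q') :
    G.specRad p q ≤ G.specRad p' q' + N * (|p - p'| + |q - q'|) := by
  have hp0 : (0:ℝ) < p := lt_of_lt_of_le one_pos hp
  have hq0 : (0:ℝ) < q := lt_of_lt_of_le one_pos hq
  have hp'0 : (0:ℝ) < p' := lt_of_lt_of_le one_pos hp'
  have hq'0 : (0:ℝ) < q' := lt_of_lt_of_le one_pos hq'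
  apply Real.sSup_le
  · rintro z ⟨x, y, hx, hy, rfl⟩
    set x' : Fin m → ℝ := fun i => |x i| ^ (p / p') with hx'def
    set y' : Fin n → ℝ := fun j => |y j| ^ (q / q') with hy'def
    have hx' : pnorm p' x' = 1 := pnorm_renorm hp hp' hx
    have hy' : pnorm q' y' = 1 := pnorm_renorm hq hq' hy
    have hmem : G.polyForm x' y' ∈
        {z | ∃ a b, pnorm p' a = 1 ∧ pnorm q' b = 1 ∧ z = G.polyForm a b} :=
      ⟨x', y', hx', hy', rfl⟩
    have h2 : G.polyForm x' y' ≤ G.specRad p' q' :=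
      le_csSup (G.bddAbove_spec hp' hq') hmem
    have h1 : G.polyForm x y ≤ G.polyForm x' y' + N * (|p - p'| + |q - q'|) := by
      unfold polyForm
      have hedge : ∀ e : Fin N,
          (∏ u ∈ G.tail e, x u) * ∏ v ∈ G.head e, y v ≤
          (∏ u ∈ G.tail e, x' u) * (∏ v ∈ G.head e, y' v)
            + (|p - p'| + |q - q'|) := by
        intro e
        set A : ℝ := ∏ u ∈ G.tail e, |x u| ^ p with hAdef
        set B : ℝ := ∏ v ∈ G.head e, |y v| ^ q with hBdef
        have hA0 : 0 ≤ A := Finset.prod_nonneg fun i _ =>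
          Real.rpow_nonneg (abs_nonneg _) _
        have hA1 : A ≤ 1 := Finset.prod_le_one
          (fun i _ => Real.rpow_nonneg (abs_nonneg _) _)
          (fun i _ => Real.rpow_le_one (abs_nonneg _)
            (abs_le_one_of_pnorm hp hx i) hp0.le)
        have hB0 : 0 ≤ B := Finset.prod_nonneg fun i _ =>
          Real.rpow_nonneg (abs_nonneg _) _
        have hB1 : B ≤ 1 := Finset.prod_le_one
          (fun i _ => Real.rpow_nonneg (abs_nonneg _) _)
          (fun i _ => Real.rpow_le_one (abs_nonneg _)
            (abs_le_one_of_pnorm hq hy i) hq0.le)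
        have eT : ∏ u ∈ G.tail e, |x u| = A ^ (1/p) := by
          rw [hAdef, ← Real.finset_prod_rpow _ _ (fun i _ => by positivity) _]
          apply Finset.prod_congr rfl
          intro u _
          rw [← Real.rpow_mul (abs_nonneg _), mul_one_div_cancel hp0.ne',
            Real.rpow_one]
        have eH : ∏ v ∈ G.head e, |y v| = B ^ (1/q) := by
          rw [hBdef, ← Real.finset_prod_rpow _ _ (fun i _ => by positivity) _]
          apply Finset.prod_congr rfl
          intro v _
          rw [← Real.rpow_mul (abs_nonneg _), mul_one_div_cancel hq0.ne',
            Real.rpow_one]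
        have eT' : ∏ u ∈ G.tail e, x' u = A ^ (1/p') := by
          rw [hAdef, ← Real.finset_prod_rpow _ _ (fun i _ => by positivity) _]
          apply Finset.prod_congr rfl
          intro u _
          rw [hx'def]
          dsimp only
          rw [← Real.rpow_mul (abs_nonneg _), mul_one_div]
        have eH' : ∏ v ∈ G.head e, y' v = B ^ (1/q') := by
          rw [hBdef, ← Real.finset_prod_rpow _ _ (fun i _ => by positivity) _]
          apply Finset.prod_congr rfl
          intro v _
          rw [hy'def]
          dsimp only
          rw [← Real.rpow_mul (abs_nonneg _), mul_one_div]
        calc (∏ u ∈ G.tail e, x u) * ∏ v ∈ G.head e, y v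
            ≤ |(∏ u ∈ G.tail e, x u) * ∏ v ∈ G.head e, y v| := le_abs_self _
          _ = (∏ u ∈ G.tail e, |x u|) * ∏ v ∈ G.head e, |y v| := by
              rw [abs_mul, Finset.abs_prod, Finset.abs_prod]
          _ = A ^ (1/p) * B ^ (1/q) := by rw [eT, eH]
          _ ≤ A ^ (1/p') * B ^ (1/q') + (|p - p'| + |q - q'|) :=
              prod_bound_aux hA0 hA1 hB0 hB1 hp hq hp' hq'
          _ = (∏ u ∈ G.tail e, x' u) * (∏ v ∈ G.head e, y' v)
              + (|p - p'| + |q - q'|) := by rw [eT', eH']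
      calc ∑ e, (∏ u ∈ G.tail e, x u) * ∏ v ∈ G.head e, y v
          ≤ ∑ e : Fin N, ((∏ u ∈ G.tail e, x' u) * (∏ v ∈ G.head e, y' v)
              + (|p - p'| + |q - q'|)) := Finset.sum_le_sum fun e _ => hedge e
        _ = (∑ e, (∏ u ∈ G.tail e, x' u) * ∏ v ∈ G.head e, y' v)
            + N * (|p - p'| + |q - q'|) := by
            rw [Finset.sum_add_distrib, Finset.sum_const, Finset.card_univ,
              Fintype.card_fin, nsmul_eq_mul]
    linarith
  · have := G.specRad_nonneg hm hn hp' hq'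
    positivity

end DirectedHypergraph

/-- Lipschitz bound `|λ_{p,q}(G) − λ_{p',q'}(G)| ≤ |E(G)|(|p−p'|+|q−q'|)`, hence
continuity of `λ_{p,q}(G)` in `(p,q)` on `[1,∞)²`. -/
theorem specRad_lipschitz_continuous (m n N r s : ℕ) (hm : 0 < m) (hn : 0 < n)
    (G : DirectedHypergraph m n N r s) :
    (∀ p q p' q' : ℝ, 1 ≤ p → 1 ≤ q → 1 ≤ p' → 1 ≤ q' →
      |G.specRad p q - G.specRad p' q'| ≤ (N : ℝ) * (|p - p'| + |q - q'|)) ∧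
    ContinuousOn (fun pq : ℝ × ℝ => G.specRad pq.1 pq.2)
      {pq : ℝ × ℝ | 1 ≤ pq.1 ∧ 1 ≤ pq.2} := by
  have key : ∀ p q p' q' : ℝ, 1 ≤ p → 1 ≤ q → 1 ≤ p' → 1 ≤ q' →
      |G.specRad p q - G.specRad p' q'| ≤ (N : ℝ) * (|p - p'| + |q - q'|) := by
    intro p q p' q' hp hq hp' hq'
    have h1 := G.specRad_le_aux hm hn hp hq hp' hq'
    have h2 := G.specRad_le_aux hm hn hp' hq' hp hq
    rw [abs_sub_comm p' p, abs_sub_comm q' q] at h2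
    rw [abs_sub_le_iff]
    constructor <;> linarith
  refine ⟨key, ?_⟩
  apply LipschitzOnWith.continuousOn (K := 2 * N)
  rw [lipschitzOnWith_iff_dist_le_mul]
  rintro ⟨p, q⟩ ⟨hp, hq⟩ ⟨p', q'⟩ ⟨hp', hq'⟩
  have hN : ((2 * (N : NNReal) : NNReal) : ℝ) = 2 * N := by push_cast; ring
  rw [Real.dist_eq, hN]
  have hD : dist p p' ≤ dist ((p,q)) ((p',q')) := by
    rw [Prod.dist_eq]; exact le_max_left _ _
  have hD2 : dist q q' ≤ dist ((p,q)) ((p',q')) := by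
    rw [Prod.dist_eq]; exact le_max_right _ _
  rw [Real.dist_eq] at hD hD2
  have hk := key p q p' q' hp hq hp' hq'
  have hNn : (0:ℝ) ≤ N := Nat.cast_nonneg N
  calc |G.specRad p q - G.specRad p' q'| ≤ (N : ℝ) * (|p - p'| + |q - q'|) := hk
    _ ≤ (N : ℝ) * (dist ((p,q)) ((p',q')) + dist ((p,q)) ((p',q'))) := by
        apply mul_le_mul_of_nonneg_left (by linarith) hNn
    _ = 2 * N * dist ((p,q)) ((p',q')) := by ring
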